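/- Let (X,d) be a finite pseudometric space and A ⊆ X a subset with d(i,j) = 0 for all i,j ∈ A; let σ be the split A | X∖A and α ≥ 0. Then LIP(X, d + α·δ_σ) = LIP(X,d) + α·S_σ, where S_σ is the segment conv{v_σ, -v_σ} with v_σ = (|X∖A|/|X|)·𝟙_A − (|A|/|X|)·𝟙_{X∖A}. -/
import Mathlib


open Pointwise

/-- The Lipschitz polytope of a pseudometric `d` on a finite set `X`. -/
def LIP {X : Type*} [Fintype X] (d : X → X → ℝ) : Set (X → ℝ) :=
  {x | (∑ i, x i) = 0 ∧ ∀ i j, x i - x j ≤ d i j}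

/-- The indicator pseudometric of a split, given by one of its sides `A`. -/
def splitDelta {X : Type*} [Fintype X] [DecidableEq X] (A : Finset X) (i j : X) : ℝ :=
  if i ∈ A ↔ j ∈ A then 0 else 1

/-- The defining vector of the segment `S_σ` for the split `σ = A | Aᶜ`. -/
noncomputable def splitVec {X : Type*} [Fintype X] [DecidableEq X] (A : Finset X) (i : X) : ℝ :=
  if i ∈ A then (Aᶜ.card : ℝ) / (Fintype.card X) else -((A.card : ℝ) / (Fintype.card X))

theorem lip_leaf_split {X : Type*} [Fintype X] [DecidableEq X] (d : X → X → ℝ)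
    (hsymm : ∀ i j, d i j = d j i) (hnonneg : ∀ i j, 0 ≤ d i j)
    (hdiag : ∀ i, d i i = 0) (htri : ∀ i j k, d i k ≤ d i j + d j k)
    (A : Finset X) (hA : A.Nonempty) (hAc : Aᶜ.Nonempty)
    (hA0 : ∀ i ∈ A, ∀ j ∈ A, d i j = 0) (α : ℝ) (hα : 0 ≤ α) :
    LIP (fun i j => d i j + α * splitDelta A i j) =
      LIP d + α • segment ℝ (splitVec A) (-(splitVec A)) := by
  classical
  have hXne : Nonempty X := ⟨hA.choose⟩
  have hn0 : (0:ℝ) < (Fintype.card X : ℝ) := by exact_mod_cast Fintype.card_pos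
  have hn0' : (Fintype.card X : ℝ) ≠ 0 := ne_of_gt hn0
  have hcard : (A.card : ℝ) + (Aᶜ.card : ℝ) = (Fintype.card X : ℝ) := by
    exact_mod_cast A.card_add_card_compl
  set v := splitVec A with hvdef
  have hvA : ∀ i ∈ A, v i = (Aᶜ.card : ℝ) / (Fintype.card X) := fun i hi => by
    simp [hvdef, splitVec, hi]
  have hvAc : ∀ i, i ∉ A → v i = -((A.card : ℝ) / (Fintype.card X)) := fun i hi => by
    simp [hvdef, splitVec, hi]
  have hsumv : ∑ i, v i = 0 := by
    rw [← Finset.sum_add_sum_compl A,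
        Finset.sum_congr rfl (fun i hi => hvA i hi),
        Finset.sum_congr rfl (fun i hi => hvAc i (Finset.mem_compl.mp hi)),
        Finset.sum_const, Finset.sum_const, nsmul_eq_mul, nsmul_eq_mul]
    field_simp
    ring
  have hdiff1 : ∀ i ∈ A, ∀ j, j ∉ A → v i - v j = 1 := by
    intro i hi j hj
    rw [hvA i hi, hvAc j hj]
    field_simp
    linarith [hcard]
  have hkey : ∀ t : ℝ, |t| ≤ α → ∀ i j, t * (v i - v j) ≤ α * splitDelta A i j := by
    intro t ht i j
    have habs := abs_le.mp ht
    by_cases hi : i ∈ A <;> by_cases hj : j ∈ A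
    · have hvv : v i = v j := by rw [hvA i hi, hvA j hj]
      simp [splitDelta, hi, hj, hvv]
    · rw [hdiff1 i hi j hj]
      have hδ : splitDelta A i j = 1 := by simp [splitDelta, hi, hj]
      rw [hδ]; linarith
    · have h1 : v j - v i = 1 := hdiff1 j hj i hi
      have hvij : v i - v j = -1 := by linarith
      rw [hvij]
      have hδ : splitDelta A i j = 1 := by simp [splitDelta, hi, hj]
      rw [hδ]; linarith
    · have hvv : v i = v j := by rw [hvAc i hi, hvAc j hj]
      simp [splitDelta, hi, hj, hvv]
  have hseg : ∀ t : ℝ, |t| ≤ α → t • v ∈ α • segment ℝ v (-v) := by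
    intro t ht
    rcases eq_or_lt_of_le hα with hα0 | hα0
    · have ht0 : t = 0 := by
        have : |t| ≤ 0 := by rw [← hα0] at ht; exact ht
        exact abs_nonpos_iff.mp this
      subst ht0
      refine Set.mem_smul_set.mpr ⟨v, left_mem_segment ℝ v (-v), ?_⟩
      rw [← hα0]
    · have h1 : |t / α| ≤ 1 := by
        rw [abs_div, abs_of_pos hα0]
        exact (div_le_one hα0).mpr ht
      have h2 := abs_le.mp h1
      refine Set.mem_smul_set.mpr ⟨(t/α) • v, ⟨(1 + t/α)/2, (1 - t/α)/2,
        by linarith, by linarith, by ring, ?_⟩, ?_⟩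
      · funext i
        simp only [Pi.add_apply, Pi.smul_apply, Pi.neg_apply, smul_eq_mul]
        ring
      · rw [smul_smul]
        congr 1
        field_simp
  ext x
  simp only [LIP, Set.mem_setOf_eq]
  constructor
  · rintro ⟨hsum, hlip⟩
    have hSne : (A ×ˢ Aᶜ).Nonempty := hA.product hAc
    set t₀ := (A ×ˢ Aᶜ).sup' hSne (fun p => x p.1 - x p.2 - d p.1 p.2) with ht₀
    set t := max (-α) t₀ with htdef
    have htlo : -α ≤ t := le_max_left _ _
    have ht₀α : t₀ ≤ α := by
      apply Finset.sup'_le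
      rintro ⟨i, j⟩ hij
      rw [Finset.mem_product] at hij
      have hi := hij.1
      have hj := Finset.mem_compl.mp hij.2
      have h := hlip i j
      have hδ : splitDelta A i j = 1 := by simp [splitDelta, hi, hj]
      simp only [hδ] at h
      simp only
      linarith
    have hthi : t ≤ α := max_le (by linarith) ht₀α
    have htabs : |t| ≤ α := abs_le.mpr ⟨htlo, hthi⟩
    have hub : ∀ p, p ∉ A → ∀ q ∈ A, t ≤ d p q - x p + x q := by
      intro p hp q hq
      apply max_le
      · have h := hlip p q
        have hδ : splitDelta A p q = 1 := by simp [splitDelta, hp, hq]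
        simp only [hδ] at h
        linarith
      · apply Finset.sup'_le
        rintro ⟨i, j⟩ hij
        rw [Finset.mem_product] at hij
        have hi := hij.1
        have hj := Finset.mem_compl.mp hij.2
        have h1 : x i - x q ≤ 0 := by
          have h := hlip i q
          have hδ : splitDelta A i q = 0 := by simp [splitDelta, hi, hq]
          have hd0 : d i q = 0 := hA0 i hi q hq
          simp only [hδ, hd0] at h
          linarith
        have h2 : x p - x j ≤ d p j := by
          have h := hlip p j
          have hδ : splitDelta A p j = 0 := by simp [splitDelta, hp, hj]
          simp only [hδ] at h
          linarith
        have h3 : d p j ≤ d p q + d i j := by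
          have t1 := htri p q j
          have t2 := htri q i j
          have hd0 : d q i = 0 := hA0 q hq i hi
          linarith
        simp only
        linarith
    have hlb : ∀ i ∈ A, ∀ j, j ∉ A → x i - x j - d i j ≤ t := by
      intro i hi j hj
      refine le_max_of_le_right ?_
      have hmem : (i, j) ∈ A ×ˢ Aᶜ := Finset.mem_product.mpr ⟨hi, Finset.mem_compl.mpr hj⟩
      exact Finset.le_sup' (fun p => x p.1 - x p.2 - d p.1 p.2) hmem
    rw [Set.mem_add]
    refine ⟨x - t • v, ⟨?_, ?_⟩, t • v, hseg t htabs, by abel⟩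
    · simp only [Pi.sub_apply, Pi.smul_apply, smul_eq_mul]
      rw [Finset.sum_sub_distrib, ← Finset.mul_sum, hsumv, hsum]
      ring
    · intro i j
      simp only [Pi.sub_apply, Pi.smul_apply, smul_eq_mul]
      by_cases hi : i ∈ A <;> by_cases hj : j ∈ A
      · have hvv : v i = v j := by rw [hvA i hi, hvA j hj]
        have h := hlip i j
        have hδ : splitDelta A i j = 0 := by simp [splitDelta, hi, hj]
        simp only [hδ] at h
        rw [hvv]; linarith
      · have h1 := hlb i hi j hj
        have hd := hdiff1 i hi j hj
        have hexp : x i - t * v i - (x j - t * v j) = (x i - x j) - t * (v i - v j) := by ring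
        rw [hexp, hd]
        linarith
      · have h1 := hub i hi j hj
        have hd : v i - v j = -1 := by
          have := hdiff1 j hj i hi; linarith
        have hexp : x i - t * v i - (x j - t * v j) = (x i - x j) - t * (v i - v j) := by ring
        rw [hexp, hd]
        linarith
      · have hvv : v i = v j := by rw [hvAc i hi, hvAc j hj]
        have h := hlip i j
        have hδ : splitDelta A i j = 0 := by simp [splitDelta, hi, hj]
        simp only [hδ] at h
        rw [hvv]; linarith
  · intro hx
    rw [Set.mem_add] at hx
    obtain ⟨y, hy, w, hw, rfl⟩ := hx
    obtain ⟨u, hu, rfl⟩ := Set.mem_smul_set.mp hw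
    obtain ⟨a, b, ha, hb, hab, rfl⟩ := hu
    obtain ⟨hsum, hlip⟩ := hy
    set t := α * (a - b) with htdef
    have htabs : |t| ≤ α := by
      rw [htdef, abs_mul, abs_of_nonneg hα]
      have hab1 : |a - b| ≤ 1 := abs_le.mpr ⟨by linarith, by linarith⟩
      nlinarith [abs_nonneg (a - b)]
    have hweq : α • (a • v + b • (-v)) = t • v := by
      funext i
      simp only [Pi.smul_apply, Pi.add_apply, Pi.neg_apply, smul_eq_mul, htdef]
      ring
    rw [hweq]
    constructor
    · simp only [Pi.add_apply, Pi.smul_apply, smul_eq_mul]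
      rw [Finset.sum_add_distrib, hsum, ← Finset.mul_sum, hsumv]
      ring
    · intro i j
      simp only [Pi.add_apply, Pi.smul_apply, smul_eq_mul]
      have h1 := hlip i j
      have h2 := hkey t htabs i j
      have hexp : y i + t * v i - (y j + t * v j) = (y i - y j) + t * (v i - v j) := by ring
      linarith
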